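/- Let p be a prime, P a nonabelian group of order p^3, and α an automorphism of P stabilizing a subgroup chain 1 < U < M < P with U ≠ Z(P) (so U has order p, M has order p^2, α(U) = U and α(M) = M). Suppose there are integers n, m, k such that α(x)·x^{−n} ∈ M for all x ∈ P, α(y)·y^{−m} ∈ U for all y ∈ M, and α(z) = z^k for all z ∈ U. Then m ≡ nk (mod p). -/

import Mathlib

private lemma conj_zpow_aux {G : Type*} [Group G] {x u c : G} (h : x * u * x⁻¹ = c * u)
    (hc : ∀ g : G, g * c = c * g) : ∀ n : ℤ, x ^ n * u * x ^ (-n) = c ^ n * u := by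
  have move : ∀ z : G, (∀ g : G, g * z = z * g) → ∀ a b d : G, a * (z * b) * d = z * (a * b * d) := by
    intro z hz a b d
    calc a * (z * b) * d = a * z * (b * d) := by group
      _ = z * a * (b * d) := by rw [hz a]
      _ = z * (a * b * d) := by group
  have hcinv : ∀ g : G, g * c⁻¹ = c⁻¹ * g := fun g => (Commute.inv_right (hc g)).eq
  have h' : x⁻¹ * u * x = c⁻¹ * u := by
    have e1 : x * (c⁻¹ * u) * x⁻¹ = c⁻¹ * (x * u * x⁻¹) := move c⁻¹ hcinv x u x⁻¹
    rw [h] at e1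
    have h2 : x⁻¹ * (x * (c⁻¹ * u) * x⁻¹) * x = x⁻¹ * (c⁻¹ * (c * u)) * x := by rw [e1]
    calc x⁻¹ * u * x = x⁻¹ * (c⁻¹ * (c * u)) * x := by group
      _ = x⁻¹ * (x * (c⁻¹ * u) * x⁻¹) * x := h2.symm
      _ = c⁻¹ * u := by group
  intro n
  induction n using Int.induction_on with
  | zero => simp
  | succ i ih =>
      calc x ^ ((i:ℤ)+1) * u * x ^ (-((i:ℤ)+1))
          = x ^ (i:ℤ) * (x * u * x⁻¹) * x ^ (-(i:ℤ)) := by group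
        _ = x ^ (i:ℤ) * (c * u) * x ^ (-(i:ℤ)) := by rw [h]
        _ = c * (x ^ (i:ℤ) * u * x ^ (-(i:ℤ))) := move c hc _ _ _
        _ = c * (c ^ (i:ℤ) * u) := by rw [ih]
        _ = c ^ ((i:ℤ)+1) * u := by rw [add_comm, zpow_add, zpow_one, mul_assoc]
  | pred i ih =>
      have ih' : x ^ (-(i:ℤ)) * u * x ^ ((i:ℤ)) = c ^ (-(i:ℤ)) * u := by
        have h2 := ih; rwa [neg_neg] at h2
      calc x ^ (-(i:ℤ)-1) * u * x ^ (-(-(i:ℤ)-1))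
          = x ^ (-(i:ℤ)) * (x⁻¹ * u * x) * x ^ ((i:ℤ)) := by group
        _ = x ^ (-(i:ℤ)) * (c⁻¹ * u) * x ^ ((i:ℤ)) := by rw [h']
        _ = c⁻¹ * (x ^ (-(i:ℤ)) * u * x ^ ((i:ℤ))) := move c⁻¹ hcinv _ _ _
        _ = c⁻¹ * (c ^ (-(i:ℤ)) * u) := by rw [ih']
        _ = c ^ (-(i:ℤ)-1) * u := by rw [sub_eq_add_neg, add_comm, zpow_add, zpow_neg_one, mul_assoc]

open scoped commutatorElement

theorem stmt_11 {P : Type*} [Group P] [Finite P] (p : ℕ) (hp : p.Prime)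
    (hcard : Nat.card P = p ^ 3) (hnonab : ∃ x y : P, x * y ≠ y * x)
    (α : MulAut P) (U M : Subgroup P)
    (hU : U ≠ Subgroup.center P)
    (hchain : ⊥ < U ∧ U < M ∧ M < ⊤)
    (hUinv : U.map α.toMonoidHom = U) (hMinv : M.map α.toMonoidHom = M)
    (n m k : ℤ)
    (hn : ∀ x : P, α x * (x ^ n)⁻¹ ∈ M)
    (hm : ∀ y ∈ M, α y * (y ^ m)⁻¹ ∈ U)
    (hk : ∀ z ∈ U, α z = z ^ k) :
    m ≡ n * k [ZMOD (p : ℤ)] := by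
  obtain ⟨hbotU, hUM, hMtop⟩ := hchain
  haveI : Fact p.Prime := ⟨hp⟩
  have hplt : 1 < p := hp.one_lt
  obtain ⟨x0, y0, hxy0⟩ := hnonab
  haveI hPnt : Nontrivial P := ⟨⟨x0 * y0, y0 * x0, hxy0⟩⟩
  have hPpg : IsPGroup p P := IsPGroup.of_card hcard
  have hlt : ∀ H K : Subgroup P, H < K → Nat.card H < Nat.card K := by
    intro H K hHK
    have hle : Nat.card H ≤ Nat.card K :=
      Nat.le_of_dvd Nat.card_pos (Subgroup.card_dvd_of_le hHK.le)
    rcases lt_or_eq_of_le hle with h | h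
    · exact h
    · exact absurd (Subgroup.eq_of_le_of_card_ge hHK.le h.ge) hHK.ne
  obtain ⟨a, ha3, hUa⟩ := (Nat.dvd_prime_pow hp).mp
    (hcard ▸ Subgroup.card_subgroup_dvd_card U)
  obtain ⟨b, hb3, hMa⟩ := (Nat.dvd_prime_pow hp).mp
    (hcard ▸ Subgroup.card_subgroup_dvd_card M)
  have h1 : 1 < Nat.card U := by
    have := hlt ⊥ U hbotU; rwa [Subgroup.card_bot] at this
  have h2 : Nat.card U < Nat.card M := hlt U M hUM
  have h3 : Nat.card M < p ^ 3 := by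
    have := hlt M ⊤ hMtop; rwa [Subgroup.card_top, hcard] at this
  rw [hUa, hMa] at h2
  rw [hMa] at h3
  have hab : a < b := (Nat.pow_lt_pow_iff_right hplt).mp h2
  have hb : b < 3 := (Nat.pow_lt_pow_iff_right hplt).mp h3
  have ha : 1 ≤ a := by
    rcases Nat.eq_zero_or_pos a with h | h
    · rw [h, pow_zero] at hUa; omega
    · exact h
  have cardU : Nat.card U = p := by rw [hUa, show a = 1 by omega, pow_one]
  have cardM : Nat.card M = p ^ 2 := by rw [hMa, show b = 2 by omega]
  set Z := Subgroup.center P with hZdef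
  have hZtop : Z ≠ ⊤ := by
    intro h
    have hy : y0 ∈ Z := by rw [h]; exact Subgroup.mem_top y0
    exact hxy0 ((Subgroup.mem_center_iff.mp hy) x0)
  have hZbot : (⊥ : Subgroup P) < Z := by
    rw [bot_lt_iff_ne_bot, ← Subgroup.nontrivial_iff_ne_bot]
    exact hPpg.center_nontrivial
  obtain ⟨cz, hcz3, hZc⟩ := (Nat.dvd_prime_pow hp).mp
    (hcard ▸ Subgroup.card_subgroup_dvd_card Z)
  have hz1 : 1 < Nat.card Z := by
    have := hlt ⊥ Z hZbot; rwa [Subgroup.card_bot] at this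
  have hz3 : Nat.card Z < p ^ 3 := by
    have := hlt Z ⊤ (lt_top_iff_ne_top.mpr hZtop)
    rwa [Subgroup.card_top, hcard] at this
  rw [hZc] at hz1 hz3
  have hcz1 : 1 ≤ cz := by
    rcases Nat.eq_zero_or_pos cz with h | h
    · rw [h, pow_zero] at hz1; omega
    · exact h
  have hczlt : cz < 3 := (Nat.pow_lt_pow_iff_right hplt).mp hz3
  have hQmul : Nat.card P = Nat.card (P ⧸ Z) * Nat.card Z :=
    Subgroup.card_eq_card_quotient_mul_card_subgroup Z
  have cardZ : Nat.card Z = p := by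
    rcases Nat.lt_or_ge cz 2 with h | h
    · rw [hZc, show cz = 1 by omega, pow_one]
    · exfalso
      have hcz2 : cz = 2 := by omega
      have hq : Nat.card (P ⧸ Z) = p := by
        rw [hcard, hZc, hcz2] at hQmul
        have hppos : 0 < p ^ 2 := by positivity
        have : p ^ 3 = p * p ^ 2 := by ring
        rw [this] at hQmul
        exact (Nat.eq_of_mul_eq_mul_right hppos hQmul.symm)
      haveI : IsCyclic (P ⧸ Z) := isCyclic_of_prime_card hq
      exact hxy0 (commutative_of_cyclic_center_quotient (QuotientGroup.mk' Z)
        (QuotientGroup.ker_mk' Z).le x0 y0)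
  have cardQ : Nat.card (P ⧸ Z) = p ^ 2 := by
    rw [hcard, cardZ] at hQmul
    have hppos : 0 < p := by omega
    have : p ^ 3 = p ^ 2 * p := by ring
    rw [this] at hQmul
    exact Nat.eq_of_mul_eq_mul_right hppos hQmul.symm
  have commQ : ∀ q r : P ⧸ Z, q * r = r * q :=
    IsPGroup.commutative_of_card_eq_prime_sq cardQ
  have hMcomm : ∀ v w : P, v ∈ M → w ∈ M → v * w = w * v := by
    intro v w hv hw
    have := IsPGroup.commutative_of_card_eq_prime_sq (p := p) cardM ⟨v, hv⟩ ⟨w, hw⟩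
    exact congrArg Subtype.val this
  have hUZ : U ⊓ Z = ⊥ := by
    by_contra hne
    have hdvd : Nat.card (U ⊓ Z : Subgroup P) ∣ p :=
      cardU ▸ Subgroup.card_dvd_of_le inf_le_left
    have h1' : Nat.card (U ⊓ Z : Subgroup P) ≠ 1 :=
      fun h => hne (Subgroup.card_eq_one.mp h)
    have hcardUZ : Nat.card (U ⊓ Z : Subgroup P) = p :=
      ((Nat.dvd_prime hp).mp hdvd).resolve_left h1'
    have e1 : U ⊓ Z = U :=
      Subgroup.eq_of_le_of_card_ge inf_le_left (by rw [hcardUZ, cardU])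
    have e2 : U ⊓ Z = Z :=
      Subgroup.eq_of_le_of_card_ge inf_le_right (by rw [hcardUZ, cardZ])
    exact hU (e1 ▸ e2)
  have hZM : Z ≤ M := by
    by_contra hnle
    have hlt' : M < M ⊔ Z := lt_of_le_of_ne le_sup_left (by
      intro hEq
      exact hnle (hEq ▸ le_sup_right))
    obtain ⟨d, hd3, hdE⟩ := (Nat.dvd_prime_pow hp).mp
      (hcard ▸ Subgroup.card_subgroup_dvd_card (M ⊔ Z))
    have hmlt : Nat.card M < Nat.card (M ⊔ Z : Subgroup P) := hlt M _ hlt'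
    rw [cardM, hdE] at hmlt
    have hd : d = 3 := by
      have := (Nat.pow_lt_pow_iff_right hplt).mp hmlt; omega
    have htop : (M ⊔ Z : Subgroup P) = ⊤ :=
      Subgroup.eq_top_of_card_eq _ (by rw [hdE, hd, hcard])
    have hMcent : M ≤ Subgroup.centralizer (M : Set P) := by
      intro g hg
      exact Subgroup.mem_centralizer_iff.mpr fun h hh => hMcomm h g hh hg
    have hZcent : Z ≤ Subgroup.centralizer (M : Set P) :=
      Subgroup.center_le_centralizer _
    have hcentTop : Subgroup.centralizer (M : Set P) = ⊤ :=
      top_le_iff.mp (htop ▸ sup_le hMcent hZcent)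
    have hMZ : (M : Set P) ⊆ (Z : Set P) :=
      Subgroup.centralizer_eq_top_iff_subset.mp hcentTop
    have hUZle : U ≤ Z := fun g hg => hMZ (hUM.le hg)
    exact hU (Subgroup.eq_of_le_of_card_ge hUZle (by rw [cardU, cardZ]))
  -- pick u and x
  obtain ⟨u, huU, huB⟩ := SetLike.exists_of_lt hbotU
  have hu1 : u ≠ 1 := by simpa [Subgroup.mem_bot] using huB
  have huZ : u ∉ Z := by
    intro h
    have : u ∈ U ⊓ Z := Subgroup.mem_inf.mpr ⟨huU, h⟩
    rw [hUZ, Subgroup.mem_bot] at this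
    exact hu1 this
  have : ∃ x : P, ¬ x * u = u * x := by
    by_contra hforall; push_neg at hforall
    exact huZ (Subgroup.mem_center_iff.mpr hforall)
  obtain ⟨x, hxu⟩ := this
  set c : P := ⁅x, u⁆ with hcdef
  have hc1 : c ≠ 1 := fun h => hxu (commutatorElement_eq_one_iff_mul_comm.mp h)
  have hcZ : c ∈ Z := by
    have hq1 : (QuotientGroup.mk' Z) c = 1 := by
      rw [hcdef, map_commutatorElement]
      exact commutatorElement_eq_one_iff_mul_comm.mpr (commQ _ _)
    rwa [← MonoidHom.mem_ker, QuotientGroup.ker_mk'] at hq1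
  have hcen : ∀ g : P, g * c = c * g := fun g => Subgroup.mem_center_iff.mp hcZ g
  have hcenz : ∀ (g : P) (e : ℤ), g * c ^ e = c ^ e * g :=
    fun g e => (Commute.zpow_right (hcen g) e).eq
  have hxconj : x * u * x⁻¹ = c * u := by
    rw [hcdef, commutatorElement_def]; group
  have key : ∀ N K : ℤ, x ^ N * u ^ K * x ^ (-N) = c ^ (N * K) * u ^ K := by
    intro N K
    have base := conj_zpow_aux hxconj hcen N
    have e1 : x ^ N * u ^ K * x ^ (-N) = (x ^ N * u * x ^ (-N)) ^ K := by
      rw [zpow_neg, conj_zpow]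
    rw [e1, base, (Commute.zpow_left (Commute.symm (hcen u)) N).mul_zpow, ← zpow_mul]
  set w : P := α x * (x ^ n)⁻¹ with hwdef
  have hwM : w ∈ M := hn x
  have hαx : α x = w * x ^ n := by rw [hwdef]; group
  have hαu : α u = u ^ k := hk u huU
  have hwu : w * u ^ k = u ^ k * w := hMcomm w (u ^ k) hwM (M.zpow_mem (hUM.le huU) k)
  have hαc : α c = c ^ (n * k) := by
    have expand : α c = ⁅w * x ^ n, u ^ k⁆ := by
      rw [hcdef, map_commutatorElement, hαx, hαu]
    calc α c = ⁅w * x ^ n, u ^ k⁆ := expand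
      _ = w * (x ^ n * u ^ k * x ^ (-n)) * w⁻¹ * (u ^ k)⁻¹ := by
          rw [commutatorElement_def, zpow_neg]; group
      _ = w * (c ^ (n * k) * u ^ k) * w⁻¹ * (u ^ k)⁻¹ := by rw [key]
      _ = c ^ (n * k) * (w * u ^ k * w⁻¹ * (u ^ k)⁻¹) := by
          rw [show w * (c ^ (n * k) * u ^ k) = w * c ^ (n * k) * u ^ k from by group,
            hcenz w (n * k)]
          group
      _ = c ^ (n * k) := by rw [hwu]; group
  have hcM : c ∈ M := hZM hcZ
  have hv := hm c hcM
  have hvZ : α c * (c ^ m)⁻¹ ∈ Z := by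
    rw [hαc]
    exact Z.mul_mem (Z.zpow_mem hcZ _) (Z.inv_mem (Z.zpow_mem hcZ _))
  have hv1 : α c * (c ^ m)⁻¹ = 1 := by
    have hmem : α c * (c ^ m)⁻¹ ∈ U ⊓ Z := Subgroup.mem_inf.mpr ⟨hv, hvZ⟩
    rwa [hUZ, Subgroup.mem_bot] at hmem
  have hzz : c ^ (n * k - m) = 1 := by
    rw [zpow_sub]; rw [hαc] at hv1; exact hv1
  have hop : orderOf c = p := by
    have hdvd : orderOf c ∣ p := by
      have hoz : orderOf (⟨c, hcZ⟩ : Z) ∣ Nat.card Z := orderOf_dvd_natCard _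
      rwa [cardZ, Subgroup.orderOf_mk] at hoz
    exact ((Nat.dvd_prime hp).mp hdvd).resolve_left (by simpa [orderOf_eq_one_iff] using hc1)
  have hpd : ((p : ℕ) : ℤ) ∣ n * k - m := by
    have hdd := orderOf_dvd_iff_zpow_eq_one.mpr hzz
    rwa [hop] at hdd
  exact (Int.modEq_iff_dvd.mpr hpd)
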